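/- Let p ≥ n > d/2 be real, d ≥ 2. For every k ∈ ℤ^d \ {0}, the sum K_{pn}(k) := 4|k|^{2p} Σ_{h ∈ ℤ^d \ {0,k}} |P_{h,k−h}|^2 / (|h|^p |k−h|^n + |h|^n |k−h|^p)^2 is finite, and moreover sup_{k ∈ ℤ^d \ {0}} K_{pn}(k) ≤ 2^{2p+2} ζ_{2n}, where ζ_{2n} := Σ_{h ∈ ℤ^d \ {0}} |h|^{−2n} < ∞. -/

import Mathlib

open scoped BigOperators
noncomputable section

/-- The lattice point `h ∈ ℤ^d` viewed as a vector of `ℝ^d`. -/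
def rvec {d : ℕ} (h : Fin d → ℤ) : EuclideanSpace ℝ (Fin d) :=
  (WithLp.equiv 2 (Fin d → ℝ)).symm (fun i => (h i : ℝ))

/-- The lattice point `h ∈ ℤ^d` viewed as a vector of `ℂ^d`. -/
def cvec {d : ℕ} (h : Fin d → ℤ) : EuclideanSpace ℂ (Fin d) :=
  (WithLp.equiv 2 (Fin d → ℂ)).symm (fun i => (h i : ℂ))

/-- The bilinear map `P_{hℓ}(a,b) = ((a·ℓ)/|ℓ|) Π_{h+ℓ} b`, where `Π_k` is the (Hermitian)
orthogonal projection of `ℂ^d` onto `k^⊥`. -/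
def Phl {d : ℕ} (h ℓ : Fin d → ℤ) (a b : EuclideanSpace ℂ (Fin d)) :
    EuclideanSpace ℂ (Fin d) :=
  ((∑ i, a i * (ℓ i : ℂ)) / (‖rvec ℓ‖ : ℂ)) •
    ((Submodule.orthogonalProjectionOnto ((ℂ ∙ cvec (h + ℓ))ᗮ) b : (ℂ ∙ cvec (h + ℓ))ᗮ) :
      EuclideanSpace ℂ (Fin d))

/-- The set of admissible constants `Q` for the bilinear map `P_{hℓ}` restricted to
`h^⊥ × ℓ^⊥` (bilinear-dot-product orthogonality with the real vectors `h`, `ℓ`). -/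
def bilinSet {d : ℕ} (h ℓ : Fin d → ℤ) : Set ℝ :=
  {Q : ℝ | 0 ≤ Q ∧ ∀ a b : EuclideanSpace ℂ (Fin d),
    (∑ i, (h i : ℂ) * a i) = 0 → (∑ i, (ℓ i : ℂ) * b i) = 0 →
      ‖Phl h ℓ a b‖ ≤ Q * ‖a‖ * ‖b‖}


/-- The norm of the bilinear map `P_{hℓ}` on `h^⊥ × ℓ^⊥`. -/
def bilinNorm {d : ℕ} (h ℓ : Fin d → ℤ) : ℝ := sInf (bilinSet h ℓ)

/-- Euclidean norm of a lattice point of `ℤ^d`. -/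
def latNorm {d : ℕ} (h : Fin d → ℤ) : ℝ := Real.sqrt (∑ i, ((h i : ℝ)) ^ 2)

/-- The general term of the sum defining `K_{pn}(k)` (without the prefactor). -/
def Kterm {d : ℕ} (p n : ℝ) (k h : Fin d → ℤ) : ℝ :=
  bilinNorm h (k - h) ^ 2 /
    (latNorm h ^ p * latNorm (k - h) ^ n + latNorm h ^ n * latNorm (k - h) ^ p) ^ 2

lemma latNorm_eq_norm {d : ℕ} (h : Fin d → ℤ) : latNorm h = ‖rvec h‖ := by
  rw [latNorm, EuclideanSpace.norm_eq]
  congr 1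
  refine Finset.sum_congr rfl fun i _ => ?_
  simp [rvec, sq_abs]

lemma norm_cvec {d : ℕ} (h : Fin d → ℤ) : ‖cvec h‖ = latNorm h := by
  rw [latNorm, EuclideanSpace.norm_eq]
  congr 1
  refine Finset.sum_congr rfl fun i _ => ?_
  simp [cvec]

lemma latNorm_nonneg {d : ℕ} (h : Fin d → ℤ) : 0 ≤ latNorm h := Real.sqrt_nonneg _

lemma rvec_eq_zero {d : ℕ} {h : Fin d → ℤ} (hr : rvec h = 0) : h = 0 := by
  funext i
  have : (h i : ℝ) = 0 := congrFun (congrArg (WithLp.equiv 2 (Fin d → ℝ)) hr) i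
  exact_mod_cast this

lemma latNorm_pos {d : ℕ} {h : Fin d → ℤ} (hh : h ≠ 0) : 0 < latNorm h := by
  rw [latNorm_eq_norm]
  exact norm_pos_iff.mpr fun h0 => hh (rvec_eq_zero h0)

lemma latNorm_triangle {d : ℕ} (k h : Fin d → ℤ) :
    latNorm k ≤ latNorm h + latNorm (k - h) := by
  have : rvec k = rvec h + rvec (k - h) := by
    apply (WithLp.equiv 2 (Fin d → ℝ)).injective
    funext i
    simp [rvec]
  rw [latNorm_eq_norm, latNorm_eq_norm, latNorm_eq_norm, this]
  exact norm_add_le _ _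

lemma abs_le_latNorm {d : ℕ} (h : Fin d → ℤ) (i : Fin d) : |(h i : ℝ)| ≤ latNorm h := by
  rw [latNorm, ← Real.sqrt_sq_eq_abs]
  apply Real.sqrt_le_sqrt
  exact Finset.single_le_sum (f := fun j => ((h j : ℝ))^2) (fun j _ => sq_nonneg _)
    (Finset.mem_univ i)

lemma one_le_latNorm {d : ℕ} {h : Fin d → ℤ} (hh : h ≠ 0) : 1 ≤ latNorm h := by
  obtain ⟨i, hi⟩ : ∃ i, h i ≠ 0 := by
    by_contra hc
    push_neg at hc
    exact hh (funext hc)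
  refine le_trans ?_ (abs_le_latNorm h i)
  rw [← Int.cast_abs]
  exact_mod_cast Int.one_le_abs hi

lemma summable_pi_prod {d : ℕ} {g : ℤ → ℝ} (hg0 : ∀ m, 0 ≤ g m) (hg : Summable g) :
    Summable (fun h : Fin d → ℤ => ∏ i, g (h i)) := by
  induction d with
  | zero =>
      haveI : Subsingleton (Fin 0 → ℤ) := ⟨fun a b => funext fun i => i.elim0⟩
      exact .of_finite
  | succ d ih =>
      have hs : Summable (fun x : ℤ × (Fin d → ℤ) => g x.1 * ∏ i, g (x.2 i)) := by
        apply Summable.mul_of_nonneg hg ih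
        · exact fun m => hg0 m
        · exact fun x => Finset.prod_nonneg fun i _ => hg0 _
      have h2 := ((Fin.consEquiv (fun _ : Fin (d+1) => ℤ)).symm.summable_iff
        (f := fun x : ℤ × (Fin d → ℤ) => g x.1 * ∏ i, g (x.2 i))).mpr hs
      refine h2.congr fun h => ?_
      simp only [Fin.consEquiv, Equiv.coe_fn_symm_mk, Function.comp]
      rw [Fin.prod_univ_succ]; rfl

lemma summable_g0 {s : ℝ} (hs : 1 < s) :
    Summable (fun m : ℤ => (max 1 |(m : ℝ)|) ^ (-s)) := by
  have h1 := Real.summable_abs_int_rpow hs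
  have h2 : Summable (fun m : ℤ => if m = 0 then (1:ℝ) else 0) :=
    summable_of_ne_finset_zero (s := {0}) (by intro b hb; simp at hb ⊢; exact hb)
  refine (h1.add h2).congr fun m => ?_
  by_cases hm : m = 0
  · subst hm
    simp [Real.zero_rpow (by linarith : -s ≠ 0)]
  · have hm1 : (1:ℝ) ≤ |(m:ℝ)| := by
      rw [← Int.cast_abs]; exact_mod_cast Int.one_le_abs hm
    simp [hm, max_eq_right hm1]

lemma zeta_summable {d : ℕ} (hd : 1 ≤ d) {n : ℝ} (hn : (d : ℝ) < 2 * n) :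
    Summable (fun h : {h : Fin d → ℤ // h ≠ 0} =>
      1 / latNorm (h : Fin d → ℤ) ^ (2 * n)) := by
  set s : ℝ := 2 * n / d with hs_def
  have hd0 : (0:ℝ) < d := by exact_mod_cast hd
  have hs : 1 < s := (one_lt_div hd0).mpr hn
  have hsum : Summable (fun h : Fin d → ℤ => ∏ i, (max 1 |(h i : ℝ)|) ^ (-s)) :=
    summable_pi_prod (g := fun m => (max 1 |(m:ℝ)|) ^ (-s))
      (fun m => Real.rpow_nonneg (le_trans zero_le_one (le_max_left _ _)) _)
      (summable_g0 hs)
  have hsub := hsum.subtype {h : Fin d → ℤ | h ≠ 0}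
  refine Summable.of_nonneg_of_le (fun h => div_nonneg zero_le_one (Real.rpow_nonneg (latNorm_nonneg _) _)) (fun h => ?_) hsub
  obtain ⟨h, hh⟩ := h
  have hL1 : 1 ≤ latNorm h := one_le_latNorm hh
  have hL0 : 0 < latNorm h := lt_of_lt_of_le one_pos hL1
  have hprod : ∏ i, (max 1 |(h i : ℝ)|) ^ s ≤ latNorm h ^ (2 * n) := by
    calc ∏ i, (max 1 |(h i : ℝ)|) ^ s
        ≤ ∏ _i : Fin d, latNorm h ^ s := by
          refine Finset.prod_le_prod (fun i _ => by positivity) (fun i _ => ?_)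
          exact Real.rpow_le_rpow (by positivity) (max_le hL1 (abs_le_latNorm h i))
            (by positivity)
      _ = (latNorm h ^ s) ^ (d : ℕ) := by
          rw [Finset.prod_const, Finset.card_univ, Fintype.card_fin]
      _ = latNorm h ^ (2 * n) := by
          rw [← Real.rpow_natCast (latNorm h ^ s) d, ← Real.rpow_mul hL0.le, hs_def,
            div_mul_cancel₀]
          exact hd0.ne'
  have hpos : (0:ℝ) < ∏ i, (max 1 |(h i : ℝ)|) ^ s :=
    Finset.prod_pos fun i _ => Real.rpow_pos_of_pos (lt_of_lt_of_le one_pos (le_max_left _ _)) _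
  calc 1 / latNorm h ^ (2 * n) ≤ 1 / ∏ i, (max 1 |(h i : ℝ)|) ^ s :=
        one_div_le_one_div_of_le hpos hprod
    _ = ∏ i, (max 1 |(h i : ℝ)|) ^ (-s) := by
        rw [one_div, ← Finset.prod_inv_distrib]
        exact Finset.prod_congr rfl fun i _ => (Real.rpow_neg (by positivity) s).symm

lemma norm_cvec_eq {d : ℕ} (ℓ : Fin d → ℤ) : ‖cvec ℓ‖ = ‖rvec ℓ‖ := by
  rw [EuclideanSpace.norm_eq, EuclideanSpace.norm_eq]
  congr 1
  refine Finset.sum_congr rfl fun i _ => ?_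
  simp [cvec, rvec]

lemma norm_Phl_le {d : ℕ} (h ℓ : Fin d → ℤ) (a b : EuclideanSpace ℂ (Fin d)) :
    ‖Phl h ℓ a b‖ ≤ ‖a‖ * ‖b‖ := by
  rw [Phl, norm_smul]
  set K := (ℂ ∙ cvec (h + ℓ))ᗮ
  have hproj : ‖((Submodule.orthogonalProjectionOnto K b : K) : EuclideanSpace ℂ (Fin d))‖ ≤ ‖b‖ := by
    rw [Submodule.norm_coe]
    calc ‖Submodule.orthogonalProjectionOnto K b‖ ≤ ‖Submodule.orthogonalProjectionOnto K‖ * ‖b‖ :=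
          (Submodule.orthogonalProjectionOnto K).le_opNorm b
      _ ≤ 1 * ‖b‖ := by
          exact mul_le_mul_of_nonneg_right (Submodule.orthogonalProjectionOnto_norm_le K) (norm_nonneg _)
      _ = ‖b‖ := one_mul _
  have hinner : (∑ i, a i * (ℓ i : ℂ)) = inner ℂ (cvec ℓ) a := by
    rw [PiLp.inner_apply]
    refine Finset.sum_congr rfl fun i _ => ?_
    simp [cvec, RCLike.inner_apply, mul_comm]
  have hnum : ‖∑ i, a i * (ℓ i : ℂ)‖ ≤ ‖rvec ℓ‖ * ‖a‖ := by
    rw [hinner, ← norm_cvec_eq]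
    exact norm_inner_le_norm _ _
  have hc : ‖(∑ i, a i * (ℓ i : ℂ)) / (‖rvec ℓ‖ : ℂ)‖ ≤ ‖a‖ := by
    rw [norm_div]
    rcases eq_or_lt_of_le (norm_nonneg (rvec ℓ)) with h0 | h0
    · have : ‖∑ i, a i * (ℓ i : ℂ)‖ ≤ 0 := by
        calc ‖∑ i, a i * (ℓ i : ℂ)‖ ≤ ‖rvec ℓ‖ * ‖a‖ := hnum
          _ = 0 := by rw [← h0, zero_mul]
      have hz : ‖∑ i, a i * (ℓ i : ℂ)‖ = 0 := le_antisymm this (norm_nonneg _)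
      rw [hz, zero_div]
      exact norm_nonneg a
    · have hden : ‖((‖rvec ℓ‖ : ℝ) : ℂ)‖ = ‖rvec ℓ‖ := by
        rw [Complex.norm_real, Real.norm_of_nonneg (norm_nonneg _)]
      rw [hden, div_le_iff₀ h0]
      calc ‖∑ i, a i * (ℓ i : ℂ)‖ ≤ ‖rvec ℓ‖ * ‖a‖ := hnum
        _ = ‖a‖ * ‖rvec ℓ‖ := mul_comm _ _
  calc ‖(∑ i, a i * (ℓ i : ℂ)) / (‖rvec ℓ‖ : ℂ)‖ *
        ‖((Submodule.orthogonalProjectionOnto K b : K) : EuclideanSpace ℂ (Fin d))‖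
      ≤ ‖a‖ * ‖b‖ := by
        apply mul_le_mul hc hproj (norm_nonneg _) (norm_nonneg _)

lemma one_mem_bilinSet {d : ℕ} (h ℓ : Fin d → ℤ) : (1 : ℝ) ∈ bilinSet h ℓ :=
  ⟨zero_le_one, fun a b _ _ => by rw [one_mul]; exact norm_Phl_le h ℓ a b⟩

lemma bilinNorm_nonneg {d : ℕ} (h ℓ : Fin d → ℤ) : 0 ≤ bilinNorm h ℓ :=
  le_csInf ⟨1, one_mem_bilinSet h ℓ⟩ fun Q hQ => hQ.1

lemma bilinNorm_le_one {d : ℕ} (h ℓ : Fin d → ℤ) : bilinNorm h ℓ ≤ 1 :=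
  csInf_le ⟨0, fun Q hQ => hQ.1⟩ (one_mem_bilinSet h ℓ)

lemma real_add_rpow (A B : ℝ) (hA : 0 ≤ A) (hB : 0 ≤ B) {p : ℝ} (hp : 1 ≤ p) :
    (A + B) ^ p ≤ 2 ^ (p - 1) * (A ^ p + B ^ p) := by
  lift A to NNReal using hA
  lift B to NNReal using hB
  have := NNReal.rpow_add_le_mul_rpow_add_rpow A B hp
  exact_mod_cast this

set_option maxHeartbeats 800000 in
lemma key_ineq {p n A B C Q : ℝ} (hn1 : 1 ≤ n) (hpn : n ≤ p) (hA : 0 < A) (hB : 0 < B)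
    (hQ0 : 0 ≤ Q) (hQ1 : Q ≤ 1) (hC0 : 0 ≤ C) (hC : C ≤ A + B) :
    4 * C ^ (2 * p) * (Q ^ 2 / (A ^ p * B ^ n + A ^ n * B ^ p) ^ 2) ≤
      2 ^ (2 * p + 1) * (1 / A ^ (2 * n) + 1 / B ^ (2 * n)) := by
  have hp1 : 1 ≤ p := hn1.trans hpn
  have ha : 0 < A ^ p := Real.rpow_pos_of_pos hA p
  have hb : 0 < B ^ p := Real.rpow_pos_of_pos hB p
  have hα : 0 < A ^ n := Real.rpow_pos_of_pos hA n
  have hβ : 0 < B ^ n := Real.rpow_pos_of_pos hB n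
  set D : ℝ := A ^ p * B ^ n + A ^ n * B ^ p with hD_def
  have hD : 0 < D := by positivity
  have hsq : ∀ x : ℝ, 0 ≤ x → x ^ (2 * p) = (x ^ p) ^ 2 := by
    intro x hx
    rw [show 2 * p = p * 2 by ring, Real.rpow_mul hx, show (2:ℝ) = ((2:ℕ):ℝ) by norm_num,
      Real.rpow_natCast]
  have hsqn : ∀ x : ℝ, 0 ≤ x → x ^ (2 * n) = (x ^ n) ^ 2 := by
    intro x hx
    rw [show 2 * n = n * 2 by ring, Real.rpow_mul hx, show (2:ℝ) = ((2:ℕ):ℝ) by norm_num,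
      Real.rpow_natCast]
  -- step 1 : C^p ≤ 2^(p-1) * (A^p + B^p)
  have h1 : C ^ p ≤ 2 ^ (p - 1) * (A ^ p + B ^ p) :=
    (Real.rpow_le_rpow hC0 hC (by linarith)).trans (real_add_rpow A B hA.le hB.le hp1)
  -- step 2 : A^p + B^p ≤ (1/A^n + 1/B^n) * D
  have h2a : A ^ p ≤ D / B ^ n :=
    (le_div_iff₀ hβ).mpr (le_add_of_nonneg_right (mul_nonneg hα.le hb.le))
  have h2b : B ^ p ≤ D / A ^ n := by
    rw [le_div_iff₀ hα]
    calc B ^ p * A ^ n = A ^ n * B ^ p := mul_comm _ _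
      _ ≤ D := le_add_of_nonneg_left (mul_nonneg ha.le hβ.le)
  have h2 : A ^ p + B ^ p ≤ (1 / A ^ n + 1 / B ^ n) * D := by
    have e : (1 / A ^ n + 1 / B ^ n) * D = D / B ^ n + D / A ^ n := by ring
    rw [e]
    exact add_le_add h2a h2b
  have hRn : 0 < 1 / A ^ n + 1 / B ^ n := by positivity
  have h3 : C ^ p ≤ 2 ^ (p - 1) * ((1 / A ^ n + 1 / B ^ n) * D) :=
    h1.trans (mul_le_mul_of_nonneg_left h2 (Real.rpow_nonneg (by norm_num) _))
  have hCp : 0 ≤ C ^ p := Real.rpow_nonneg hC0 p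
  have h4 : (C ^ p) ^ 2 ≤ (2 ^ (p - 1)) ^ 2 * ((1 / A ^ n + 1 / B ^ n) * D) ^ 2 := by
    rw [← mul_pow]
    exact pow_le_pow_left₀ hCp h3 2
  -- powers of two
  have h2p : (2:ℝ) ^ (p - 1) = 2 ^ p / 2 := by
    rw [Real.rpow_sub two_pos, Real.rpow_one]
  have h2p2 : (2:ℝ) ^ (2 * p + 1) = 2 * (2 ^ p) ^ 2 := by
    rw [Real.rpow_add two_pos, Real.rpow_one, show 2 * p = p * 2 by ring,
      Real.rpow_mul (by norm_num : (0:ℝ) ≤ 2), show (2:ℝ) = ((2:ℕ):ℝ) by norm_num,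
      Real.rpow_natCast]
    ring_nf
  -- squares
  have h5 : (1 / A ^ n + 1 / B ^ n) ^ 2 ≤ 2 * (1 / A ^ (2 * n) + 1 / B ^ (2 * n)) := by
    rw [hsqn A hA.le, hsqn B hB.le]
    have e1 : 1 / (A ^ n) ^ 2 = (1 / A ^ n) ^ 2 := by rw [div_pow, one_pow]
    have e2 : 1 / (B ^ n) ^ 2 = (1 / B ^ n) ^ 2 := by rw [div_pow, one_pow]
    rw [e1, e2]
    nlinarith [sq_nonneg (1 / A ^ n - 1 / B ^ n)]
  -- assemble
  have hM0 : 0 ≤ 2 ^ (p - 1) * ((1 / A ^ n + 1 / B ^ n) * D) :=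
    mul_nonneg (Real.rpow_nonneg (by norm_num) _) (mul_nonneg hRn.le hD.le)
  have hD2 : (0:ℝ) < D ^ 2 := pow_pos hD 2
  have hQ2 : Q ^ 2 ≤ 1 := pow_le_one₀ hQ0 hQ1
  have stepA : Q ^ 2 / D ^ 2 ≤ 1 / D ^ 2 := by gcongr
  have h4' : 4 * (C ^ p) ^ 2 ≤ 4 * ((2 ^ (p - 1)) ^ 2 * ((1 / A ^ n + 1 / B ^ n) * D) ^ 2) :=
    mul_le_mul_of_nonneg_left h4 (by norm_num)
  have h5' : (1 / A ^ n + 1 / B ^ n) ^ 2 ≤ 2 * ((1 / A ^ n) ^ 2 + (1 / B ^ n) ^ 2) := by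
    nlinarith [sq_nonneg (1 / A ^ n - 1 / B ^ n)]
  have hDne : D ≠ 0 := hD.ne'
  have h2pow0 : (0:ℝ) ≤ (2 ^ p : ℝ) ^ 2 := sq_nonneg _
  calc 4 * C ^ (2 * p) * (Q ^ 2 / D ^ 2)
      = 4 * (C ^ p) ^ 2 * (Q ^ 2 / D ^ 2) := by rw [hsq C hC0]
    _ ≤ 4 * ((2 ^ (p - 1)) ^ 2 * ((1 / A ^ n + 1 / B ^ n) * D) ^ 2) * (1 / D ^ 2) := by
        refine mul_le_mul h4' stepA (div_nonneg (sq_nonneg Q) hD2.le) ?_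
        exact mul_nonneg (by norm_num) (mul_nonneg (sq_nonneg _) (sq_nonneg _))
    _ = (2 ^ p) ^ 2 * (1 / A ^ n + 1 / B ^ n) ^ 2 := by
        rw [h2p]
        field_simp
        ring
    _ ≤ (2 ^ p) ^ 2 * (2 * ((1 / A ^ n) ^ 2 + (1 / B ^ n) ^ 2)) :=
        mul_le_mul_of_nonneg_left h5' h2pow0
    _ = 2 ^ (2 * p + 1) * (1 / A ^ (2 * n) + 1 / B ^ (2 * n)) := by
        rw [h2p2, hsqn A hA.le, hsqn B hB.le, div_pow, div_pow, one_pow]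
        ring


lemma latNorm_pos_sub {d : ℕ} {k h : Fin d → ℤ} (hk : h ≠ k) : 0 < latNorm (k - h) :=
  latNorm_pos (sub_ne_zero.mpr (Ne.symm hk))

set_option maxHeartbeats 800000 in
/-- Let `p ≥ n > d/2` (`d ≥ 2`). Then `ζ_{2n} = Σ_{h≠0} |h|^{-2n}` is finite, and for every
`k ∈ ℤ^d \ {0}` the sum defining
`K_{pn}(k) = 4|k|^{2p} Σ_{h ∉ {0,k}} |P_{h,k-h}|² / (|h|^p|k-h|^n + |h|^n|k-h|^p)²`
is finite and `K_{pn}(k) ≤ 2^{2p+2} ζ_{2n}`. -/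
theorem Kpn_finite_and_bounded (d : ℕ) (hd : 2 ≤ d) (p n : ℝ) (hpn : n ≤ p)
    (hn : (d : ℝ) / 2 < n) :
    Summable (fun h : {h : Fin d → ℤ // h ≠ 0} =>
      1 / latNorm (h : Fin d → ℤ) ^ (2 * n)) ∧
    ∀ k : Fin d → ℤ, k ≠ 0 →
      Summable (fun h : {h : Fin d → ℤ // h ≠ 0 ∧ h ≠ k} =>
        Kterm p n k (h : Fin d → ℤ)) ∧
      4 * latNorm k ^ (2 * p) *
          ∑' h : {h : Fin d → ℤ // h ≠ 0 ∧ h ≠ k}, Kterm p n k (h : Fin d → ℤ) ≤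
        2 ^ (2 * p + 2) *
          ∑' h : {h : Fin d → ℤ // h ≠ 0}, 1 / latNorm (h : Fin d → ℤ) ^ (2 * n) := by
  have hd1 : 1 ≤ d := le_trans (by norm_num) hd
  have hd2 : (2:ℝ) ≤ (d:ℝ) := by exact_mod_cast hd
  have hn1 : 1 ≤ n := by linarith
  have hdn : (d : ℝ) < 2 * n := by linarith
  have hζ : Summable (fun h : {h : Fin d → ℤ // h ≠ 0} =>
      1 / latNorm (h : Fin d → ℤ) ^ (2 * n)) := zeta_summable hd1 hdn
  refine ⟨hζ, fun k hk => ?_⟩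
  have hCk : 0 < latNorm k ^ (2 * p) := Real.rpow_pos_of_pos (latNorm_pos hk) _
  -- nonnegativity of the zeta summand
  have hg0 : ∀ h : Fin d → ℤ, (0:ℝ) ≤ 1 / latNorm h ^ (2 * n) := fun h =>
    div_nonneg zero_le_one (Real.rpow_nonneg (latNorm_nonneg _) _)
  have hZ0 : 0 ≤ ∑' h : {h : Fin d → ℤ // h ≠ 0}, 1 / latNorm (h : Fin d → ℤ) ^ (2 * n) :=
    tsum_nonneg fun h => hg0 _
  -- injections into the nonzero lattice
  have e1inj : Function.Injective
      (fun h : {h : Fin d → ℤ // h ≠ 0 ∧ h ≠ k} => (⟨h.1, h.2.1⟩ : {h : Fin d → ℤ // h ≠ 0})) :=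
    by
    intro a b hab
    have h1 : ((⟨a.1, a.2.1⟩ : {h : Fin d → ℤ // h ≠ 0})).1 =
        ((⟨b.1, b.2.1⟩ : {h : Fin d → ℤ // h ≠ 0})).1 := congrArg Subtype.val hab
    exact Subtype.ext h1
  have e2inj : Function.Injective
      (fun h : {h : Fin d → ℤ // h ≠ 0 ∧ h ≠ k} =>
        (⟨k - h.1, sub_ne_zero.mpr (Ne.symm h.2.2)⟩ : {h : Fin d → ℤ // h ≠ 0})) := by
    intro a b hab
    have : k - a.1 = k - b.1 := congrArg Subtype.val hab
    exact Subtype.ext (by linear_combination (norm := abel) -this)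
  -- summability of the two comparison functions
  have hF1 : Summable (fun h : {h : Fin d → ℤ // h ≠ 0 ∧ h ≠ k} =>
      1 / latNorm (h : Fin d → ℤ) ^ (2 * n)) := by
    have := hζ.comp_injective e1inj
    exact this.congr fun h => rfl
  have hF2 : Summable (fun h : {h : Fin d → ℤ // h ≠ 0 ∧ h ≠ k} =>
      1 / latNorm (k - (h : Fin d → ℤ)) ^ (2 * n)) := by
    have := hζ.comp_injective e2inj
    exact this.congr fun h => rfl
  have hFsum : Summable (fun h : {h : Fin d → ℤ // h ≠ 0 ∧ h ≠ k} =>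
      1 / latNorm (h : Fin d → ℤ) ^ (2 * n) + 1 / latNorm (k - (h : Fin d → ℤ)) ^ (2 * n)) :=
    hF1.add hF2
  -- pointwise bound
  have hbound : ∀ h : {h : Fin d → ℤ // h ≠ 0 ∧ h ≠ k},
      4 * latNorm k ^ (2 * p) * Kterm p n k (h : Fin d → ℤ) ≤
        2 ^ (2 * p + 1) * (1 / latNorm (h : Fin d → ℤ) ^ (2 * n) +
          1 / latNorm (k - (h : Fin d → ℤ)) ^ (2 * n)) := by
    rintro ⟨h, hh0, hhk⟩
    have hA : 0 < latNorm h := latNorm_pos hh0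
    have hB : 0 < latNorm (k - h) := latNorm_pos_sub hhk
    simp only [Kterm]
    exact key_ineq hn1 hpn hA hB (bilinNorm_nonneg h (k - h)) (bilinNorm_le_one h (k - h))
      (latNorm_nonneg k) (latNorm_triangle k h)
  have hK0 : ∀ h : {h : Fin d → ℤ // h ≠ 0 ∧ h ≠ k}, (0:ℝ) ≤ Kterm p n k (h : Fin d → ℤ) :=
    fun h => div_nonneg (sq_nonneg _) (sq_nonneg _)
  -- summability of the scaled terms
  have hscaled : Summable (fun h : {h : Fin d → ℤ // h ≠ 0 ∧ h ≠ k} =>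
      4 * latNorm k ^ (2 * p) * Kterm p n k (h : Fin d → ℤ)) := by
    apply Summable.of_nonneg_of_le
      (fun h => mul_nonneg (mul_nonneg (by norm_num) hCk.le) (hK0 h)) hbound
    exact hFsum.mul_left _
  have hKsum : Summable (fun h : {h : Fin d → ℤ // h ≠ 0 ∧ h ≠ k} =>
      Kterm p n k (h : Fin d → ℤ)) := by
    have := hscaled.mul_left ((4 * latNorm k ^ (2 * p))⁻¹)
    refine this.congr fun h => ?_
    rw [inv_mul_cancel_left₀ (mul_pos four_pos hCk).ne']
  refine ⟨hKsum, ?_⟩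
  -- comparison of tsums with ζ
  have hle1 : ∑' h : {h : Fin d → ℤ // h ≠ 0 ∧ h ≠ k}, 1 / latNorm (h : Fin d → ℤ) ^ (2 * n) ≤
      ∑' h : {h : Fin d → ℤ // h ≠ 0}, 1 / latNorm (h : Fin d → ℤ) ^ (2 * n) := by
    exact Summable.tsum_le_tsum_of_inj
      (fun h : {h : Fin d → ℤ // h ≠ 0 ∧ h ≠ k} => (⟨h.1, h.2.1⟩ : {h : Fin d → ℤ // h ≠ 0}))
      e1inj (fun c _ => hg0 _) (fun h => le_rfl) hF1 hζ
  have hle2 : ∑' h : {h : Fin d → ℤ // h ≠ 0 ∧ h ≠ k},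
      1 / latNorm (k - (h : Fin d → ℤ)) ^ (2 * n) ≤
      ∑' h : {h : Fin d → ℤ // h ≠ 0}, 1 / latNorm (h : Fin d → ℤ) ^ (2 * n) := by
    exact Summable.tsum_le_tsum_of_inj
      (fun h : {h : Fin d → ℤ // h ≠ 0 ∧ h ≠ k} =>
        (⟨k - h.1, sub_ne_zero.mpr (Ne.symm h.2.2)⟩ : {h : Fin d → ℤ // h ≠ 0}))
      e2inj (fun c _ => hg0 _) (fun h => le_rfl) hF2 hζ
  have h2pow : (2:ℝ) ^ (2 * p + 2) = 2 ^ (2 * p + 1) * 2 := by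
    rw [show 2 * p + 2 = (2 * p + 1) + 1 by ring, Real.rpow_add two_pos, Real.rpow_one]
  have h2pos : (0:ℝ) ≤ (2:ℝ) ^ (2 * p + 1) := Real.rpow_nonneg (by norm_num) _
  calc 4 * latNorm k ^ (2 * p) *
        ∑' h : {h : Fin d → ℤ // h ≠ 0 ∧ h ≠ k}, Kterm p n k (h : Fin d → ℤ)
      = ∑' h : {h : Fin d → ℤ // h ≠ 0 ∧ h ≠ k},
          4 * latNorm k ^ (2 * p) * Kterm p n k (h : Fin d → ℤ) := by
        rw [tsum_mul_left]
    _ ≤ ∑' h : {h : Fin d → ℤ // h ≠ 0 ∧ h ≠ k},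
          2 ^ (2 * p + 1) * (1 / latNorm (h : Fin d → ℤ) ^ (2 * n) +
            1 / latNorm (k - (h : Fin d → ℤ)) ^ (2 * n)) :=
        Summable.tsum_le_tsum hbound hscaled (hFsum.mul_left _)
    _ = 2 ^ (2 * p + 1) * ∑' h : {h : Fin d → ℤ // h ≠ 0 ∧ h ≠ k},
          (1 / latNorm (h : Fin d → ℤ) ^ (2 * n) +
            1 / latNorm (k - (h : Fin d → ℤ)) ^ (2 * n)) := tsum_mul_left
    _ = 2 ^ (2 * p + 1) *
          ((∑' h : {h : Fin d → ℤ // h ≠ 0 ∧ h ≠ k}, 1 / latNorm (h : Fin d → ℤ) ^ (2 * n)) +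
           ∑' h : {h : Fin d → ℤ // h ≠ 0 ∧ h ≠ k},
             1 / latNorm (k - (h : Fin d → ℤ)) ^ (2 * n)) := by
        rw [Summable.tsum_add hF1 hF2]
    _ ≤ 2 ^ (2 * p + 1) *
          ((∑' h : {h : Fin d → ℤ // h ≠ 0}, 1 / latNorm (h : Fin d → ℤ) ^ (2 * n)) +
           ∑' h : {h : Fin d → ℤ // h ≠ 0}, 1 / latNorm (h : Fin d → ℤ) ^ (2 * n)) :=
        mul_le_mul_of_nonneg_left (add_le_add hle1 hle2) h2pos
    _ = 2 ^ (2 * p + 2) *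
          ∑' h : {h : Fin d → ℤ // h ≠ 0}, 1 / latNorm (h : Fin d → ℤ) ^ (2 * n) := by
        rw [h2pow]; ring
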